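/- Let α be a composition of n. The relation ≼ on SIT(α), defined by T_1 ≼ T_2 iff there exist indices i_1,…,i_r (possibly r = 0) such that successively applying π_{i_1}^{RS*},…,π_{i_r}^{RS*} to T_1 yields T_2, is a partial order on SIT(α): it is reflexive, transitive, and antisymmetric. -/

import Mathlib

open Classical

namespace ImmHecke

/-- A filling assigns a natural-number entry to each cell `(row, column)` (0-indexed);
row `0` is the bottom row.  Cells outside the diagram carry the junk value `0`. -/
abbrev Filling : Type := ℕ × ℕ → ℕ

/-- `c` is a cell of the diagram of the composition `α` (0-indexed rows and columns;
row `i` has `α_i` cells). -/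
def IsCell (α : List ℕ) (c : ℕ × ℕ) : Prop :=
  c.1 < α.length ∧ c.2 < α.getD c.1 0

/-- `α` is a composition of `n`: a list of positive integers summing to `n`. -/
def IsComposition (α : List ℕ) (n : ℕ) : Prop :=
  (∀ a ∈ α, 0 < a) ∧ α.sum = n

/-- `T` is a bijective filling of the diagram of `α` with the entries `1, …, n`
(where `n = α.sum`), and with value `0` off the diagram. -/
def IsStdFilling (α : List ℕ) (T : Filling) : Prop :=
  (∀ c, ¬ IsCell α c → T c = 0) ∧
  (∀ c, IsCell α c → 1 ≤ T c ∧ T c ≤ α.sum) ∧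
  (∀ c c', IsCell α c → IsCell α c' → T c = T c' → c = c') ∧
  (∀ m, 1 ≤ m → m ≤ α.sum → ∃ c, IsCell α c ∧ T c = m)

/-- A standard immaculate tableau of shape `α`: a bijective standard filling whose
first-column entries strictly increase bottom to top and whose rows strictly
increase left to right. -/
def IsSIT (α : List ℕ) (T : Filling) : Prop :=
  IsStdFilling α T ∧
  (∀ i i' : ℕ, IsCell α (i, 0) → IsCell α (i', 0) → i < i' → T (i, 0) < T (i', 0)) ∧
  (∀ i j j' : ℕ, IsCell α (i, j) → IsCell α (i, j') → j < j' → T (i, j) < T (i, j'))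

/-- A standard extended tableau of shape `α`: a bijective standard filling whose rows
strictly increase left to right and all of whose columns strictly increase
bottom to top.  Note `SET(α) ⊆ SIT(α)`. -/
def IsSET (α : List ℕ) (T : Filling) : Prop :=
  IsStdFilling α T ∧
  (∀ i j j' : ℕ, IsCell α (i, j) → IsCell α (i, j') → j < j' → T (i, j) < T (i, j')) ∧
  (∀ i i' j : ℕ, IsCell α (i, j) → IsCell α (i', j) → i < i' → T (i, j) < T (i', j))

/-- `SIT*(α)`: standard immaculate tableaux whose first column contains exactly the
entries `1, 2, …, ℓ(α)`. -/
def IsSITstar (α : List ℕ) (T : Filling) : Prop :=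
  IsSIT α T ∧
  (∀ i, IsCell α (i, 0) → 1 ≤ T (i, 0) ∧ T (i, 0) ≤ α.length) ∧
  (∀ m, 1 ≤ m → m ≤ α.length → ∃ i, IsCell α (i, 0) ∧ T (i, 0) = m)

/-- In `T`, the entry `m+1` lies in a row strictly above the row of `m`. -/
def SuccAbove (α : List ℕ) (T : Filling) (m : ℕ) : Prop :=
  ∃ c c', IsCell α c ∧ IsCell α c' ∧ T c = m ∧ T c' = m + 1 ∧ c.1 < c'.1

/-- In `T`, the entries `m` and `m+1` lie in the same row. -/
def SuccSameRow (α : List ℕ) (T : Filling) (m : ℕ) : Prop :=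
  ∃ c c', IsCell α c ∧ IsCell α c' ∧ T c = m ∧ T c' = m + 1 ∧ c.1 = c'.1

/-- In `T`, the entry `m+1` lies in a row strictly below the row of `m`. -/
def SuccBelow (α : List ℕ) (T : Filling) (m : ℕ) : Prop :=
  ∃ c c', IsCell α c ∧ IsCell α c' ∧ T c = m ∧ T c' = m + 1 ∧ c'.1 < c.1

/-- In `T`, the entries `m` and `m+1` are both in the first column. -/
def BothFirstColumn (α : List ℕ) (T : Filling) (m : ℕ) : Prop :=
  ∃ c c', IsCell α c ∧ IsCell α c' ∧ T c = m ∧ T c' = m + 1 ∧ c.2 = 0 ∧ c'.2 = 0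

/-- `s_i(T)`: exchange the entries `i` and `i+1` of `T`. -/
def swapEntries (i : ℕ) (T : Filling) : Filling :=
  fun c => if T c = i then i + 1 else if T c = i + 1 then i else T c

/-- The row-strict dual immaculate 0-Hecke operator `π_i^{RS*}` on `SIT(α) ∪ {0}`
(`0` is encoded as `none`): `π_i(T) = T` if `i+1` is strictly above `i`;
`π_i(T) = 0` if `i` and `i+1` are in the same row; `π_i(T) = s_i(T)` if `i+1` is
strictly below `i`. -/
noncomputable def piRS (α : List ℕ) (i : ℕ) : Option Filling → Option Filling
  | none => none
  | some T =>
    if SuccAbove α T i then some T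
    else if SuccSameRow α T i then none
    else some (swapEntries i T)

/-- The dual immaculate 0-Hecke operator `π_i^{S*}` on `SIT(α) ∪ {0}`:
`π_i(T) = T` if `i+1` is in a row weakly below `i`; `π_i(T) = 0` if `i` and `i+1`
are both in the first column; `π_i(T) = s_i(T)` if `i+1` is strictly above `i`
and `i, i+1` are not both in the first column. -/
noncomputable def piS (α : List ℕ) (i : ℕ) : Option Filling → Option Filling
  | none => none
  | some T =>
    if SuccSameRow α T i ∨ SuccBelow α T i then some T
    else if BothFirstColumn α T i then none
    else some (swapEntries i T)

/-- The 0-Hecke operator `π_i^{A*}` on `SIT(α)`: `π_i(T) = T` if `i+1` is strictly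
above `i` or in the same row as `i`; `π_i(T) = s_i(T)` if `i+1` is strictly below `i`. -/
noncomputable def piA (α : List ℕ) (i : ℕ) (T : Filling) : Filling :=
  if SuccBelow α T i then swapEntries i T else T

/-- The 0-Hecke operator `π_i^{Ā*}` on `SIT(α) ∪ {0}`: `π_i(T) = T` if `i+1` is
strictly below `i`; `π_i(T) = 0` if `i` and `i+1` are in the same row or both in
the first column; `π_i(T) = s_i(T)` if `i+1` is strictly above `i` and `i, i+1`
are not both in the first column. -/
noncomputable def piAbar (α : List ℕ) (i : ℕ) : Option Filling → Option Filling
  | none => none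
  | some T =>
    if SuccBelow α T i then some T
    else if SuccSameRow α T i ∨ BothFirstColumn α T i then none
    else some (swapEntries i T)

/-- `x` belongs to `SIT(α) ∪ {0}` (with `0 = none`). -/
def InSITZ (α : List ℕ) (x : Option Filling) : Prop :=
  ∀ T, x = some T → IsSIT α T

/-- Successively apply the operators `π_{i_1}^{RS*}, …, π_{i_r}^{RS*}` (the list `l = [i_1, …, i_r]`). -/
noncomputable def applySeqRS (α : List ℕ) (l : List ℕ) (x : Option Filling) : Option Filling :=
  l.foldl (fun y i => piRS α i y) x

/-- Successively apply the operators `π_{i_1}^{S*}, …, π_{i_r}^{S*}`. -/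
noncomputable def applySeqS (α : List ℕ) (l : List ℕ) (x : Option Filling) : Option Filling :=
  l.foldl (fun y i => piS α i y) x

/-- The relation `T₁ ≼ T₂` on `SIT(α)`: some sequence of operators `π_i^{RS*}`
(indices in `{1, …, n-1}`, possibly empty) sends `T₁` to `T₂`. -/
def preRS (α : List ℕ) (T₁ T₂ : Filling) : Prop :=
  ∃ l : List ℕ, (∀ i ∈ l, 1 ≤ i ∧ i ≤ α.sum - 1) ∧ applySeqRS α l (some T₁) = some T₂

/-- The one-line notation of `σ(T)`: read the entries of `T` from right to left in
each row, rows from top to bottom. -/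
def readingWord (α : List ℕ) (T : Filling) : List ℕ :=
  ((List.range α.length).reverse).flatMap
    (fun i => ((List.range (α.getD i 0)).map fun j => T (i, j)).reverse)

/-- The number of inversions of a word `w`: pairs of positions `p < q` with `w p > w q`. -/
def inversions (w : List ℕ) : ℕ :=
  ((Finset.range w.length ×ˢ Finset.range w.length).filter
    (fun pq : ℕ × ℕ => pq.1 < pq.2 ∧ w.getD pq.2 0 < w.getD pq.1 0)).card

/-- `S⁰_α`: first column contains `1, …, ℓ` bottom to top; the remaining cells are
filled with `ℓ+1, …, n` consecutively, reading rows from top to bottom and left to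
right within each row. -/
noncomputable def S0 (α : List ℕ) : Filling := fun c =>
  if IsCell α c then
    if c.2 = 0 then c.1 + 1
    else
      α.length + (((List.range α.length).filter fun r => c.1 < r).map fun r => α.getD r 0 - 1).sum + c.2
  else 0

/-- `S^{row}_α`: the row superstandard tableau, entries `1, …, n` placed consecutively
reading rows bottom to top, left to right within each row. -/
noncomputable def Srow (α : List ℕ) : Filling := fun c =>
  if IsCell α c then (α.take c.1).sum + c.2 + 1 else 0

/-- `S^{row*}_α`: first column contains `1, …, ℓ` bottom to top; the remaining cells
are filled with `ℓ+1, …, n` consecutively, reading rows bottom to top, left to right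
within each row. -/
noncomputable def SrowStar (α : List ℕ) : Filling := fun c =>
  if IsCell α c then
    if c.2 = 0 then c.1 + 1
    else α.length + ((List.range c.1).map fun r => α.getD r 0 - 1).sum + c.2
  else 0

/-- `S^{col}_α`: the column superstandard tableau, entries `1, …, n` placed
consecutively reading columns bottom to top, columns left to right. -/
noncomputable def Scol (α : List ℕ) : Filling := fun c =>
  if IsCell α c then
    ((List.range c.2).map fun j' =>
        ((List.range α.length).filter fun r => j' < α.getD r 0).length).sum
      + ((List.range c.1).filter fun r => c.2 < α.getD r 0).length + 1
  else 0

/-- The image of a basis element of `V_α` under the linearly extended operator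
`π_i^{RS*}` (the value `0` of the operator is interpreted as the zero vector). -/
noncomputable def piTargetRS (α : List ℕ) (i : ℕ) (T : {T : Filling // IsSIT α T}) :
    ({T : Filling // IsSIT α T} →₀ ℚ) :=
  match piRS α i (some T.val) with
  | none => 0
  | some T' => if h : IsSIT α T' then Finsupp.single ⟨T', h⟩ 1 else 0

/-- The operator `π_i^{RS*}` extended to a `ℚ`-linear endomorphism of the free
`ℚ`-vector space `V_α` with basis `SIT(α)`. -/
noncomputable def piRSLin (α : List ℕ) (i : ℕ) :
    ({T : Filling // IsSIT α T} →₀ ℚ) →ₗ[ℚ] ({T : Filling // IsSIT α T} →₀ ℚ) :=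
  Finsupp.lsum ℚ fun T => LinearMap.toSpanSingleton ℚ _ (piTargetRS α i T)

/-- The image of a basis element of `Z_α` under the linearly extended operator
`π_i^{RS*}`. -/
noncomputable def piTargetSET (α : List ℕ) (i : ℕ) (T : {T : Filling // IsSET α T}) :
    ({T : Filling // IsSET α T} →₀ ℚ) :=
  match piRS α i (some T.val) with
  | none => 0
  | some T' => if h : IsSET α T' then Finsupp.single ⟨T', h⟩ 1 else 0

/-- The operator `π_i^{RS*}` extended to a `ℚ`-linear endomorphism of the free
`ℚ`-vector space `Z_α` with basis `SET(α)`. -/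
noncomputable def piRSLinSET (α : List ℕ) (i : ℕ) :
    ({T : Filling // IsSET α T} →₀ ℚ) →ₗ[ℚ] ({T : Filling // IsSET α T} →₀ ℚ) :=
  Finsupp.lsum ℚ fun T => LinearMap.toSpanSingleton ℚ _ (piTargetSET α i T)

/-- Weight function: sum over cells of `(row * (n+1) + col + 1) * entry`. -/
noncomputable def wt (α : List ℕ) (T : Filling) : ℕ :=
  ∑ c ∈ (Finset.range α.length ×ˢ Finset.range (α.sum + 1)).filter (fun c => IsCell α c),
    (c.1 * (α.sum + 1) + c.2 + 1) * T c

lemma getD_le_sum (α : List ℕ) (k : ℕ) : α.getD k 0 ≤ α.sum := by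
  induction α generalizing k with
  | nil => simp [List.getD]
  | cons a l ih =>
    cases k with
    | zero => simp [List.getD]
    | succ k =>
      have := ih k
      simp only [List.getD_cons_succ, List.sum_cons]
      omega

lemma cell_mem (α : List ℕ) (c : ℕ × ℕ) (hc : IsCell α c) :
    c ∈ (Finset.range α.length ×ˢ Finset.range (α.sum + 1)).filter
      (fun c => IsCell α c) := by
  have h1 := hc.1
  have h2 := hc.2
  have h3 := getD_le_sum α c.1
  simp only [Finset.mem_filter, Finset.mem_product, Finset.mem_range]
  exact ⟨⟨h1, by omega⟩, hc⟩

lemma step_lemma (α : List ℕ) (i : ℕ) (T T' : Filling) (hT : IsSIT α T)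
    (hi1 : 1 ≤ i) (hi2 : i + 1 ≤ α.sum)
    (h : piRS α i (some T) = some T') :
    IsSIT α T' ∧ wt α T ≤ wt α T' ∧ (wt α T' = wt α T → T' = T) := by
  obtain ⟨⟨hzero, hrange, hinj, hsurj⟩, hcol, hrow⟩ := hT
  replace h : (if SuccAbove α T i then some T
      else if SuccSameRow α T i then none else some (swapEntries i T)) = some T' := h
  split_ifs at h with hab hsr
  · -- identity case
    obtain rfl : T = T' := Option.some.inj h
    exact ⟨⟨⟨hzero, hrange, hinj, hsurj⟩, hcol, hrow⟩, le_rfl, fun _ => rfl⟩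
  · -- swap case
    obtain rfl : T' = swapEntries i T := (Option.some.inj h).symm
    obtain ⟨c, hc, hTc⟩ := hsurj i hi1 (by omega)
    obtain ⟨c', hc', hTc'⟩ := hsurj (i+1) (by omega) hi2
    have hlt : c'.1 < c.1 := by
      rcases Nat.lt_trichotomy c.1 c'.1 with h1 | h1 | h1
      · exact absurd ⟨c, c', hc, hc', hTc, hTc', h1⟩ hab
      · exact absurd ⟨c, c', hc, hc', hTc, hTc', h1⟩ hsr
      · exact h1
    -- key order-preservation lemma
    have key : ∀ d e : ℕ × ℕ, IsCell α d → IsCell α e → T d < T e →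
        ¬(d = c ∧ e = c') → swapEntries i T d < swapEntries i T e := by
      intro d e hd he hde hne
      have hbad : ¬(T d = i ∧ T e = i + 1) := by
        rintro ⟨h1, h2⟩
        exact hne ⟨hinj d c hd hc (h1.trans hTc.symm),
          hinj e c' he hc' (h2.trans hTc'.symm)⟩
      unfold swapEntries
      split_ifs <;> omega
    have hsit : IsSIT α (swapEntries i T) := by
      refine ⟨⟨?_, ?_, ?_, ?_⟩, ?_, ?_⟩
      · intro d hd
        unfold swapEntries
        rw [hzero d hd]
        rw [if_neg (by omega), if_neg (by omega)]
      · intro d hd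
        have := hrange d hd
        unfold swapEntries
        split_ifs <;> omega
      · intro d e hd he hde
        apply hinj d e hd he
        unfold swapEntries at hde
        split_ifs at hde <;> omega
      · intro m hm1 hm2
        by_cases hmi : m = i
        · refine ⟨c', hc', ?_⟩
          unfold swapEntries
          rw [hTc', if_neg (by omega), if_pos rfl]
          omega
        · by_cases hmi1 : m = i + 1
          · refine ⟨c, hc, ?_⟩
            unfold swapEntries
            rw [hTc, if_pos rfl]
            omega
          · obtain ⟨d, hd, hTd⟩ := hsurj m hm1 hm2
            refine ⟨d, hd, ?_⟩
            unfold swapEntries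
            rw [hTd, if_neg hmi, if_neg hmi1]
      · intro r r' h1 h2 hrr
        apply key (r, 0) (r', 0) h1 h2 (hcol r r' h1 h2 hrr)
        rintro ⟨rfl, rfl⟩
        simp only at hlt
        omega
      · intro r j j' h1 h2 hjj
        apply key (r, j) (r, j') h1 h2 (hrow r j j' h1 h2 hjj)
        rintro ⟨rfl, rfl⟩
        simp only at hlt
        omega
    -- weight computation
    set S := α.sum with hS
    set cells := (Finset.range α.length ×ˢ Finset.range (S + 1)).filter
      (fun c => IsCell α c) with hcells
    have hcmem : c ∈ cells := cell_mem α c hc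
    have hc'mem : c' ∈ cells := cell_mem α c' hc'
    have hne_cc' : c ≠ c' := by
      intro h
      rw [h, hTc'] at hTc
      omega
    have hsum : wt α (swapEntries i T) + (c'.1 * (S + 1) + c'.2 + 1)
        = wt α T + (c.1 * (S + 1) + c.2 + 1) := by
      have e1 : (∑ d ∈ cells, (if d = c' then (d.1 * (S + 1) + d.2 + 1) else 0))
          = c'.1 * (S + 1) + c'.2 + 1 := by
        rw [Finset.sum_ite_eq' cells c' (fun d => d.1 * (S + 1) + d.2 + 1)]
        simp [hc'mem]
      have e2 : (∑ d ∈ cells, (if d = c then (d.1 * (S + 1) + d.2 + 1) else 0))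
          = c.1 * (S + 1) + c.2 + 1 := by
        rw [Finset.sum_ite_eq' cells c (fun d => d.1 * (S + 1) + d.2 + 1)]
        simp [hcmem]
      unfold wt
      rw [← hS, ← hcells, ← e1, ← e2, ← Finset.sum_add_distrib, ← Finset.sum_add_distrib]
      apply Finset.sum_congr rfl
      intro d hd
      have hdcell : IsCell α d := (Finset.mem_filter.mp hd).2
      by_cases hdc : d = c
      · subst hdc
        rw [if_neg hne_cc', if_pos rfl]
        unfold swapEntries
        rw [hTc, if_pos rfl]
        ring_nf
      · by_cases hdc' : d = c'
        · subst hdc'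
          rw [if_pos rfl, if_neg (fun h => hdc h)]
          unfold swapEntries
          rw [hTc', if_neg (by omega), if_pos rfl]
          ring_nf
        · rw [if_neg hdc', if_neg hdc]
          have h1 : T d ≠ i := fun h => hdc (hinj d c hdcell hc (h.trans hTc.symm))
          have h2 : T d ≠ i + 1 := fun h => hdc' (hinj d c' hdcell hc' (h.trans hTc'.symm))
          unfold swapEntries
          rw [if_neg h1, if_neg h2]
    have hflt : c'.1 * (S + 1) + c'.2 + 1 < c.1 * (S + 1) + c.2 + 1 := by
      have h1 : c'.1 + 1 ≤ c.1 := hlt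
      have h2 : c'.2 ≤ S := by
        have := hc'.2
        have := getD_le_sum α c'.1
        omega
      have h3 : (c'.1 + 1) * (S + 1) ≤ c.1 * (S + 1) := Nat.mul_le_mul_right _ h1
      have h4 : c'.1 * (S + 1) + (S + 1) = (c'.1 + 1) * (S + 1) := by ring
      omega
    exact ⟨hsit, by omega, by omega⟩

lemma applySeqRS_none (α : List ℕ) (l : List ℕ) : applySeqRS α l none = none := by
  induction l with
  | nil => rfl
  | cons i l ih =>
    show applySeqRS α l (piRS α i none) = none
    exact ih

lemma chain_lemma (α : List ℕ) : ∀ (l : List ℕ) (T T' : Filling), IsSIT α T →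
    (∀ i ∈ l, 1 ≤ i ∧ i ≤ α.sum - 1) → applySeqRS α l (some T) = some T' →
    IsSIT α T' ∧ wt α T ≤ wt α T' ∧ (wt α T' = wt α T → T' = T) := by
  intro l
  induction l with
  | nil =>
    intro T T' h _ happ
    obtain rfl : T = T' := Option.some.inj happ
    exact ⟨h, le_rfl, fun _ => rfl⟩
  | cons i l ih =>
    intro T T' hT hl happ
    have happ' : applySeqRS α l (piRS α i (some T)) = some T' := happ
    cases hU : piRS α i (some T) with
    | none =>
      rw [hU, applySeqRS_none] at happ'
      exact absurd happ' (by simp)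
    | some U =>
      have hi := hl i (List.mem_cons_self (a := i) (l := l))
      have hi1 : 1 ≤ i := hi.1
      have hi2 : i + 1 ≤ α.sum := by omega
      obtain ⟨hU_sit, hU_le, hU_eq⟩ := step_lemma α i T U hT hi1 hi2 hU
      rw [hU] at happ'
      obtain ⟨h1, h2, h3⟩ := ih U T' hU_sit (fun j hj => hl j (List.mem_cons_of_mem _ hj)) happ'
      refine ⟨h1, le_trans hU_le h2, fun he => ?_⟩
      have hUe : wt α U = wt α T := by omega
      have hUT : U = T := hU_eq hUe
      have hT'U : T' = U := h3 (by omega)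
      rw [hT'U, hUT]

theorem preRS_is_partial_order (n : ℕ) (α : List ℕ) (hα : IsComposition α n) :
    (∀ T, IsSIT α T → preRS α T T) ∧
    (∀ T₁ T₂ T₃, IsSIT α T₁ → IsSIT α T₂ → IsSIT α T₃ →
      preRS α T₁ T₂ → preRS α T₂ T₃ → preRS α T₁ T₃) ∧
    (∀ T₁ T₂, IsSIT α T₁ → IsSIT α T₂ → preRS α T₁ T₂ → preRS α T₂ T₁ → T₁ = T₂) := by
  refine ⟨?_, ?_, ?_⟩
  · intro T _
    exact ⟨[], by simp, rfl⟩
  · intro T₁ T₂ T₃ _ _ _ h12 h23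
    obtain ⟨l₁, hl₁, e₁⟩ := h12
    obtain ⟨l₂, hl₂, e₂⟩ := h23
    refine ⟨l₁ ++ l₂, ?_, ?_⟩
    · intro i hi
      rcases List.mem_append.mp hi with h | h
      · exact hl₁ i h
      · exact hl₂ i h
    · have : applySeqRS α (l₁ ++ l₂) (some T₁)
          = applySeqRS α l₂ (applySeqRS α l₁ (some T₁)) := by
        unfold applySeqRS
        rw [List.foldl_append]
      rw [this, e₁, e₂]
  · intro T₁ T₂ h₁ h₂ h12 h21
    obtain ⟨l, hl, e⟩ := h12
    obtain ⟨l', hl', e'⟩ := h21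
    obtain ⟨_, le12, eq1⟩ := chain_lemma α l T₁ T₂ h₁ hl e
    obtain ⟨_, le21, _⟩ := chain_lemma α l' T₂ T₁ h₂ hl' e'
    exact (eq1 (le_antisymm le21 le12)).symm

end ImmHecke
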